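/- For the difference function of a Bézier curve, C(1−s) − C(t) = ((1−s) − t) · n · S(s,t) for all s, t with (1−s) ≠ t, where S is the published symmetric form; consequently, if (s,t) is in the domain D = {(s,t) : s+t < 1, s,t ≥ 0, (s,t) ≠ (0,0)} and S(s,t) = 0, then C(1−s) = C(t) with 1−s ≠ t, i.e., the curve is self-intersecting. -/
import Mathlib


/-- The Bézier curve of degree `n` with control points `P : ℕ → ℝ³`
(only `P 0, …, P n` are used). -/
noncomputable def bezier (n : ℕ) (P : ℕ → EuclideanSpace ℝ (Fin 3)) (t : ℝ) :
    EuclideanSpace ℝ (Fin 3) :=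
  ∑ i ∈ Finset.range (n + 1), ((n.choose i : ℝ) * t ^ i * (1 - t) ^ (n - i)) • P i

/-- The published symmetric form `S(s,t)` (Andersson et al.), expressed in terms of the
edge vectors `q i = P (i+1) - P i`. -/
noncomputable def selfIntForm (n : ℕ) (P : ℕ → EuclideanSpace ℝ (Fin 3)) (s t : ℝ) :
    EuclideanSpace ℝ (Fin 3) :=
  (1 / (n : ℝ)) •
    ∑ i ∈ Finset.range n, ∑ j ∈ Finset.range (n - i),
      (((n - 1 - i).choose j : ℝ) * s ^ (n - 1 - i - j) * (1 - s) ^ j) •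
        ∑ k ∈ Finset.range (i + 1),
          ((i.choose k : ℝ) * (1 - t) ^ (i - k) * t ^ k) • (P (j + k + 1) - P (j + k))

open Finset

noncomputable def bern (n p : ℕ) (y : ℝ) : ℝ :=
  (n.choose p : ℝ) * y ^ p * (1 - y) ^ (n - p)

lemma bern_succ (n p : ℕ) (y : ℝ) :
    bern (n+1) p y
      = (1 - y) * bern n p y + y * (if p = 0 then 0 else bern n (p-1) y) := by
  rcases p with _ | m
  · simp only [if_pos rfl, mul_zero, add_zero, bern, Nat.choose_zero_right, pow_zero,
      Nat.sub_zero]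
    push_cast
    ring
  · simp only [if_neg (Nat.succ_ne_zero m), Nat.succ_sub_one, bern]
    rcases lt_or_ge m n with h | h
    · have h1 : n + 1 - (m+1) = (n - (m+1)) + 1 := by omega
      have h2 : n - m = (n - (m+1)) + 1 := by omega
      rw [Nat.choose_succ_succ, h1, h2]
      push_cast
      ring
    · have h0 : n.choose (m+1) = 0 := Nat.choose_eq_zero_of_lt (by omega)
      have h1 : (n+1).choose (m+1) = n.choose m := by
        rw [Nat.choose_succ_succ, h0, Nat.add_zero]
      have h2 : n + 1 - (m + 1) = 0 := by omega
      have h3 : n - (m+1) = 0 := by omega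
      have h4 : n - m = 0 := by omega
      rw [h0, h1, h2, h3, h4]
      push_cast
      ring

lemma bsum_succ (i : ℕ) (t : ℝ) (a : ℕ → ℝ) :
    ∑ k ∈ range (i + 2), (((i+1).choose k : ℝ) * (1 - t) ^ (i + 1 - k) * t ^ k * a k)
    = (1 - t) * ∑ k ∈ range (i + 1), ((i.choose k : ℝ) * (1 - t) ^ (i - k) * t ^ k * a k)
      + t * ∑ k ∈ range (i + 1), ((i.choose k : ℝ) * (1 - t) ^ (i - k) * t ^ k * a (k + 1)) := by
  rw [Finset.sum_range_succ' _ (i+1)]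
  have e1 : ∀ k ∈ range (i+1),
      (((i+1).choose (k+1) : ℝ) * (1 - t) ^ (i + 1 - (k+1)) * t ^ (k+1) * a (k+1))
      = ((i.choose k : ℝ) * (1-t)^(i-k) * t^(k+1) * a (k+1))
        + ((i.choose (k+1) : ℝ) * (1-t)^(i-k) * t^(k+1) * a (k+1)) := by
    intro k hk
    rw [Nat.choose_succ_succ, Nat.succ_sub_succ]
    push_cast
    ring
  rw [Finset.sum_congr rfl e1, Finset.sum_add_distrib]
  -- second piece : t * B
  have e2 : t * ∑ k ∈ range (i + 1), ((i.choose k : ℝ) * (1 - t) ^ (i - k) * t ^ k * a (k + 1))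
      = ∑ k ∈ range (i+1), ((i.choose k : ℝ) * (1-t)^(i-k) * t^(k+1) * a (k+1)) := by
    rw [Finset.mul_sum]
    exact Finset.sum_congr rfl fun k _ => by ring
  -- first piece
  have e3 : (1 - t) * ∑ k ∈ range (i + 1), ((i.choose k : ℝ) * (1 - t) ^ (i - k) * t ^ k * a k)
      = ∑ k ∈ range (i+1), ((i.choose (k+1) : ℝ) * (1-t)^(i-k) * t^(k+1) * a (k+1))
        + (((i+1).choose 0 : ℝ) * (1 - t) ^ (i + 1 - 0) * t ^ 0 * a 0) := by
    rw [Finset.sum_range_succ' _ i, mul_add]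
    congr 1
    · rw [Finset.mul_sum, Finset.sum_range_succ,
        Nat.choose_succ_self, Nat.cast_zero, zero_mul, zero_mul, zero_mul, add_zero]
      refine Finset.sum_congr rfl fun k hk => ?_
      have hk' : k < i := Finset.mem_range.mp hk
      have : i - k = (i - (k+1)) + 1 := by omega
      rw [this]
      push_cast
      ring
    · simp
      ring
  rw [e2, e3]
  ring

noncomputable def ff (n m : ℕ) (u t : ℝ) : ℝ :=
  ∑ i ∈ range n, ∑ j ∈ range (n - i), ∑ k ∈ range (i + 1),
    (i.choose k : ℝ) * (1 - t) ^ (i - k) * t ^ k *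
      (if j + k = m then ((n - 1 - i).choose j : ℝ) * u ^ j * (1 - u) ^ (n - 1 - i - j) else 0)

lemma ff_succ (n m : ℕ) (u t : ℝ) :
    ff (n+1) m u t
      = bern n m u + (1 - t) * ff n m u t
        + t * (if m = 0 then 0 else ff n (m-1) u t) := by
  unfold ff
  rw [Finset.sum_range_succ' _ n]
  have h0 : (∑ j ∈ range (n + 1 - 0), ∑ k ∈ range (0 + 1),
      ((0:ℕ).choose k : ℝ) * (1 - t) ^ (0 - k) * t ^ k *
        (if j + k = m then ((n + 1 - 1 - 0).choose j : ℝ) * u ^ j * (1 - u) ^ (n + 1 - 1 - 0 - j) else 0))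
      = bern n m u := by
    simp only [Nat.sub_zero, Nat.add_sub_cancel, zero_add, Finset.sum_range_one,
      Nat.choose_zero_right, Nat.cast_one, pow_zero, mul_one, one_mul, Nat.add_zero, add_zero]
    rw [Finset.sum_ite_eq' (range (n+1)) m
      (fun j => (n.choose j : ℝ) * u ^ j * (1 - u) ^ (n - j))]
    by_cases hm : m ∈ range (n+1)
    · rw [if_pos hm]; rfl
    · rw [if_neg hm]
      have : n.choose m = 0 := Nat.choose_eq_zero_of_lt (by
        simpa using Finset.mem_range.not.mp hm |> fun h => by omega)
      simp [bern, this]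
  have h1 : ∀ i ∈ range n,
      (∑ j ∈ range (n + 1 - (i+1)), ∑ k ∈ range ((i+1) + 1),
        (((i+1).choose k : ℝ)) * (1 - t) ^ ((i+1) - k) * t ^ k *
          (if j + k = m then ((n + 1 - 1 - (i+1)).choose j : ℝ) * u ^ j * (1 - u) ^ (n + 1 - 1 - (i+1) - j) else 0))
      = (1 - t) * (∑ j ∈ range (n - i), ∑ k ∈ range (i + 1),
            (i.choose k : ℝ) * (1 - t) ^ (i - k) * t ^ k *
              (if j + k = m then ((n - 1 - i).choose j : ℝ) * u ^ j * (1 - u) ^ (n - 1 - i - j) else 0))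
        + t * (∑ j ∈ range (n - i), ∑ k ∈ range (i + 1),
            (i.choose k : ℝ) * (1 - t) ^ (i - k) * t ^ k *
              (if j + (k+1) = m then ((n - 1 - i).choose j : ℝ) * u ^ j * (1 - u) ^ (n - 1 - i - j) else 0)) := by
    intro i hi
    have e1 : n + 1 - (i+1) = n - i := by omega
    have e2 : n + 1 - 1 - (i+1) = n - 1 - i := by omega
    simp only [e1, e2, show i + 1 + 1 = i + 2 from rfl]
    rw [Finset.sum_congr rfl (fun j _ => bsum_succ i t
      (fun k => if j + k = m then ((n - 1 - i).choose j : ℝ) * u ^ j * (1 - u) ^ (n - 1 - i - j) else 0))]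
    rw [Finset.sum_add_distrib, ← Finset.mul_sum, ← Finset.mul_sum]
  rw [Finset.sum_congr rfl h1, Finset.sum_add_distrib, ← Finset.mul_sum, ← Finset.mul_sum, h0]
  have h2 : (∑ i ∈ range n, ∑ j ∈ range (n - i), ∑ k ∈ range (i + 1),
      (i.choose k : ℝ) * (1 - t) ^ (i - k) * t ^ k *
        (if j + (k+1) = m then ((n - 1 - i).choose j : ℝ) * u ^ j * (1 - u) ^ (n - 1 - i - j) else 0))
      = (if m = 0 then 0 else
          ∑ i ∈ range n, ∑ j ∈ range (n - i), ∑ k ∈ range (i + 1),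
            (i.choose k : ℝ) * (1 - t) ^ (i - k) * t ^ k *
              (if j + k = m - 1 then ((n - 1 - i).choose j : ℝ) * u ^ j * (1 - u) ^ (n - 1 - i - j) else 0)) := by
    rcases m with _ | m'
    · simp
    · rw [if_neg (Nat.succ_ne_zero m'), Nat.succ_sub_one]
      refine Finset.sum_congr rfl fun i _ => Finset.sum_congr rfl fun j _ =>
        Finset.sum_congr rfl fun k _ => ?_
      congr 1
      exact if_congr (by omega) rfl rfl
  rw [h2]
  ring

lemma ff_ge (n m : ℕ) (h : n ≤ m) (u t : ℝ) : ff n m u t = 0 := by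
  unfold ff
  refine Finset.sum_eq_zero fun i hi => Finset.sum_eq_zero fun j hj =>
    Finset.sum_eq_zero fun k hk => ?_
  rw [if_neg, mul_zero]
  have hi' := Finset.mem_range.mp hi
  have hj' := Finset.mem_range.mp hj
  have hk' := Finset.mem_range.mp hk
  omega

lemma bern_sub (n : ℕ) : ∀ (p : ℕ) (u t : ℝ),
    bern n p u - bern n p t
      = (u - t) * ((if p = 0 then 0 else ff n (p-1) u t) - ff n p u t) := by
  induction n with
  | zero =>
    intro p u t
    have h1 : ff 0 p u t = 0 := ff_ge 0 p (Nat.zero_le p) u t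
    rcases p with _ | m
    · simp [bern, h1]
    · simp only [if_neg (Nat.succ_ne_zero m), Nat.succ_sub_one, h1,
        ff_ge 0 m (Nat.zero_le m) u t]
      simp [bern, Nat.choose_eq_zero_of_lt (Nat.succ_pos m)]
  | succ n ih =>
    intro p u t
    rcases p with _ | m
    · have ih0 := ih 0 u t
      rw [if_pos rfl] at ih0
      rw [bern_succ, bern_succ, ff_succ]
      simp only [reduceIte, mul_zero, add_zero]
      linear_combination (1 - t) * ih0
    · have ih1 := ih (m+1) u t
      have ih2 := ih m u t
      rw [if_neg (Nat.succ_ne_zero m), Nat.succ_sub_one] at ih1 ⊢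
      rw [bern_succ, bern_succ, ff_succ, ff_succ]
      simp only [Nat.succ_ne_zero, if_false, Nat.succ_sub_one]
      linear_combination (1 - t) * ih1 + t * ih2

lemma sbig (n : ℕ) (P : ℕ → EuclideanSpace ℝ (Fin 3)) (s t : ℝ) :
    (∑ i ∈ range n, ∑ j ∈ range (n - i),
      (((n - 1 - i).choose j : ℝ) * s ^ (n - 1 - i - j) * (1 - s) ^ j) •
        ∑ k ∈ range (i + 1),
          ((i.choose k : ℝ) * (1 - t) ^ (i - k) * t ^ k) • (P (j + k + 1) - P (j + k)))
    = ∑ m ∈ range n, ff n m (1 - s) t • (P (m + 1) - P m) := by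
  have step1 : ∀ m ∈ range n, ff n m (1 - s) t • (P (m + 1) - P m)
      = ∑ i ∈ range n, ∑ j ∈ range (n - i), ∑ k ∈ range (i + 1),
          ((i.choose k : ℝ) * (1 - t) ^ (i - k) * t ^ k *
            (if j + k = m then ((n - 1 - i).choose j : ℝ) * (1 - s) ^ j
              * (1 - (1 - s)) ^ (n - 1 - i - j) else 0)) • (P (m + 1) - P m) := by
    intro m _
    simp only [ff, Finset.sum_smul]
  rw [Finset.sum_congr rfl step1]
  rw [Finset.sum_comm]
  conv_rhs => enter [2, i]; rw [Finset.sum_comm]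
  conv_rhs => enter [2, i, 2, j]; rw [Finset.sum_comm]
  simp only [Finset.smul_sum, smul_smul, mul_ite, mul_zero, ite_smul, zero_smul]
  refine Finset.sum_congr rfl fun i hi => Finset.sum_congr rfl fun j hj =>
    Finset.sum_congr rfl fun k hk => ?_
  rw [Finset.sum_ite_eq (range n) (j + k)
    (fun m => (((i.choose k : ℝ) * (1 - t) ^ (i - k) * t ^ k) *
      (((n - 1 - i).choose j : ℝ) * (1 - s) ^ j * (1 - (1 - s)) ^ (n - 1 - i - j)))
        • (P (m + 1) - P m))]
  rw [if_pos (Finset.mem_range.mpr (by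
    have := Finset.mem_range.mp hi
    have := Finset.mem_range.mp hj
    have := Finset.mem_range.mp hk
    omega))]
  congr 1
  rw [sub_sub_cancel]
  ring

lemma main_id (n : ℕ) (hn : 1 ≤ n) (P : ℕ → EuclideanSpace ℝ (Fin 3)) (s t : ℝ) :
    bezier n P (1 - s) - bezier n P t = (((1 - s) - t) * n) • selfIntForm n P s t := by
  have hn' : (n : ℝ) ≠ 0 := Nat.cast_ne_zero.mpr (by omega)
  have hc : ((1 - s) - t) * (n : ℝ) * (1 / n) = (1 - s) - t := by field_simp
  have hL : bezier n P (1 - s) - bezier n P t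
      = ∑ p ∈ range (n + 1),
          (((1 - s) - t) * ((if p = 0 then 0 else ff n (p - 1) (1 - s) t)
            - ff n p (1 - s) t)) • P p := by
    rw [bezier, bezier, ← Finset.sum_sub_distrib]
    refine Finset.sum_congr rfl fun p _ => ?_
    rw [← sub_smul]
    congr 1
    have h := bern_sub n p (1 - s) t
    simpa [bern] using h
  have hR : ((1 - s) - t) • ∑ m ∈ range n, ff n m (1 - s) t • (P (m + 1) - P m)
      = ∑ p ∈ range (n + 1),
          (((1 - s) - t) * ((if p = 0 then 0 else ff n (p - 1) (1 - s) t)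
            - ff n p (1 - s) t)) • P p := by
    rw [Finset.smul_sum]
    simp only [smul_smul, smul_sub]
    rw [Finset.sum_sub_distrib]
    have e : ∀ p ∈ range (n + 1),
        (((1 - s) - t) * ((if p = 0 then 0 else ff n (p - 1) (1 - s) t)
          - ff n p (1 - s) t)) • P p
        = (((1 - s) - t) * (if p = 0 then 0 else ff n (p - 1) (1 - s) t)) • P p
          - (((1 - s) - t) * ff n p (1 - s) t) • P p := by
      intro p _
      rw [← sub_smul]
      congr 1
      ring
    rw [Finset.sum_congr rfl e, Finset.sum_sub_distrib]
    congr 1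
    · rw [Finset.sum_range_succ' _ n]
      simp only [Nat.succ_ne_zero, if_false, Nat.succ_sub_one, reduceIte, mul_zero,
        zero_smul, add_zero]
    · rw [Finset.sum_range_succ, ff_ge n n le_rfl, mul_zero, zero_smul, add_zero]
  rw [selfIntForm, smul_smul, hc, sbig, hR, hL]

theorem bezier_selfIntersection_criterion (n : ℕ) (hn : 1 ≤ n)
    (P : ℕ → EuclideanSpace ℝ (Fin 3)) :
    (∀ s t : ℝ, (1 - s) ≠ t →
      bezier n P (1 - s) - bezier n P t = (((1 - s) - t) * n) • selfIntForm n P s t) ∧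
    (∀ s t : ℝ, 0 ≤ s → 0 ≤ t → s + t < 1 → (s, t) ≠ (0, 0) →
      selfIntForm n P s t = 0 →
      bezier n P (1 - s) = bezier n P t ∧ (1 - s) ≠ t) := by
  constructor
  · intro s t _
    exact main_id n hn P s t
  · intro s t hs ht hsum _ hS
    have hne : (1 : ℝ) - s ≠ t := by
      intro h
      apply absurd hsum
      push_neg
      linarith
    have h1 := main_id n hn P s t
    rw [hS, smul_zero] at h1
    exact ⟨sub_eq_zero.mp h1, hne⟩
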